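/- Let F be a finite field of characteristic 2 and x, y ∈ F \ {0} with x ≠ y. Then (x⁻¹ − y⁻¹)/(x − y) ≠ x⁻¹/x = x⁻², and also for distinct nonzero x, y, z, (x⁻¹ − y⁻¹)/(x − y) = (x⁻¹ − z⁻¹)/(x − z) implies y = z. -/

import Mathlib

/-- Slope computations in characteristic 2 for the inversion map: for distinct nonzero
x, y the secant slope (x⁻¹ − y⁻¹)/(x − y) differs from x⁻¹/x = x⁻², and equal secant
slopes from x force equal second points. -/
theorem inversion_slopes {F : Type*} [Field F] [Fintype F] (hchar : ringChar F = 2) :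
    (∀ x y : F, x ≠ 0 → y ≠ 0 → x ≠ y →
        (x⁻¹ - y⁻¹) / (x - y) ≠ x⁻¹ / x ∧ x⁻¹ / x = x⁻¹ * x⁻¹) ∧
      (∀ x y z : F, x ≠ 0 → y ≠ 0 → z ≠ 0 → x ≠ y → x ≠ z →
        (x⁻¹ - y⁻¹) / (x - y) = (x⁻¹ - z⁻¹) / (x - z) → y = z) := by
  haveI : CharP F 2 := ringChar.of_eq hchar
  have h2 : (2 : F) = 0 := by exact_mod_cast CharP.cast_eq_zero F 2
  constructor
  · intro x y hx hy hxy
    refine ⟨fun h => hxy ?_, by rw [div_eq_mul_inv]⟩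
    have hsub : x - y ≠ 0 := sub_ne_zero.mpr hxy
    field_simp at h
    have key : x * ((x - y) * (x - y)) = 0 := by
      linear_combination -x * h + (x * y * y - x * x * y) * h2
    have := mul_eq_zero.mp key
    rcases this with h' | h'
    · exact absurd h' hx
    · rcases mul_eq_zero.mp h' with h'' | h'' <;> exact sub_eq_zero.mp h''
  · intro x y z hx hy hz hxy hxz h
    have h1 : x - y ≠ 0 := sub_ne_zero.mpr hxy
    have h2' : x - z ≠ 0 := sub_ne_zero.mpr hxz
    field_simp at h
    have key : x * (x - y) * (x - z) * (y - z) = 0 := by linear_combination x * h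
    have hyz : y - z = 0 := by
      rcases mul_eq_zero.mp key with h' | h'
      · rcases mul_eq_zero.mp h' with h'' | h''
        · rcases mul_eq_zero.mp h'' with h3 | h3
          · exact absurd h3 hx
          · exact absurd h3 h1
        · exact absurd h'' h2'
      · exact h'
    exact sub_eq_zero.mp hyz
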